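/- arXiv:2401.01890 — 2 statements merged into one kernel-verified Lean document; each statement's English description precedes it below -/
import Mathlib

section
/- For n > 2, a planar binary rooted tree t with n leaves is ⋋-irreducible if and only if, writing t = t^l ∨ t^r, the left subtree t^l is ⋋-irreducible and the right subtree t^r has more than one leaf. -/
open Classical

/-- Planar binary rooted trees. `leaf` is the unique tree `|` with one leaf. -/
inductive PBT : Type
  | leaf : PBT
  | node : PBT → PBT → PBT
  deriving DecidableEq

/-- Number of leaves of a planar binary rooted tree. -/
def leavesCount : PBT → ℕ
  | .leaf => 1
  | .node l r => leavesCount l + leavesCount r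

/-- Graft the tree `w` onto the leftmost (first) leaf of `t`. -/
def graft1 : PBT → PBT → PBT
  | .leaf, w => w
  | .node l r, w => .node (graft1 l w) r

/-- The product `t ⋋ w := w ∘₁ (t ∨ |)`. -/
def lprod (t w : PBT) : PBT := graft1 w (.node t .leaf)

/-- A tree is `⋋`-irreducible if it is not a product of two (nonempty) trees. -/
def Irr (t : PBT) : Prop := ¬ ∃ u w : PBT, t = lprod u w

lemma leavesCount_pos (t : PBT) : 1 ≤ leavesCount t := by
  induction t with
  | leaf => simp [leavesCount]
  | node a b iha ihb => simp [leavesCount]; omega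

lemma one_lt_iff (t : PBT) : 1 < leavesCount t ↔ t ≠ PBT.leaf := by
  cases t with
  | leaf => simp [leavesCount]
  | node a b =>
    have := leavesCount_pos a
    have := leavesCount_pos b
    simp [leavesCount]
    omega

/-- For a tree `t = t^l ∨ t^r` with more than two leaves, `t` is
`⋋`-irreducible iff `t^l` is `⋋`-irreducible and `t^r` has more than one leaf. -/
theorem stmt3 (l r : PBT) (h : 2 < leavesCount (PBT.node l r)) :
    Irr (PBT.node l r) ↔ Irr l ∧ 1 < leavesCount r := by
  rw [one_lt_iff]
  constructor
  · intro hirr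
    constructor
    · rintro ⟨u, w, rfl⟩
      exact hirr ⟨u, PBT.node w r, by simp [lprod, graft1]⟩
    · rintro rfl
      exact hirr ⟨l, PBT.leaf, by simp [lprod, graft1]⟩
  · rintro ⟨hl, hr⟩ ⟨u, w, hw⟩
    cases w with
    | leaf =>
      simp [lprod, graft1] at hw
      exact hr hw.2
    | node wl wr =>
      simp [lprod, graft1] at hw
      exact hl ⟨u, wl, hw.1⟩
end

section
/- Let M_{1ₙ} denote the Möbius element of the maximal tree 1ₙ in the Tamari lattice on trees with n leaves (the right comb), defined by M_t = Σ_{w ≤_T t} μ(w,t)·w in the free vector space on trees. Then M_{1ₙ} = | ∨ M_{1ₙ₋₁} − | ⋋ M_{1ₙ₋₁} for n ≥ 3, where ∨ and ⋋ are extended bilinearly. -/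
open Classical

/-- One covering move of the Tamari order: a right rotation
`(a ∨ b) ∨ c ↦ a ∨ (b ∨ c)` applied at some internal node. -/
inductive TStep : PBT → PBT → Prop
  | rot (a b c : PBT) : TStep (.node (.node a b) c) (.node a (.node b c))
  | left {a a' : PBT} (c : PBT) : TStep a a' → TStep (.node a c) (.node a' c)
  | right (a : PBT) {c c' : PBT} : TStep c c' → TStep (.node a c) (.node a c')

/-- The Tamari order on planar binary rooted trees: the reflexive transitive
closure of the rotation moves. -/
def tle : PBT → PBT → Prop := Relation.ReflTransGen TStep

/-- The right comb `1ₙ`: `rightComb n` has `n+1` leaves, so `1ₙ = rightComb (n-1)`. -/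
def rightComb : ℕ → PBT
  | 0 => .leaf
  | n + 1 => .node .leaf (rightComb n)

/-- The left comb `0ₙ`: `leftComb n` has `n+1` leaves, so `0ₙ = leftComb (n-1)`. -/
def leftComb : ℕ → PBT
  | 0 => .leaf
  | n + 1 => .node (leftComb n) .leaf

/-! basic lemmas -/

lemma lc_pos (t : PBT) : 0 < leavesCount t := by
  induction t with
  | leaf => simp [leavesCount]
  | node a b iha ihb => simp [leavesCount]; omega

/-- weight strictly increasing along rotations -/
def wt : PBT → ℕ
  | .leaf => 0
  | .node a b => wt a + wt b + leavesCount b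

lemma TStep.lc_eq {a b : PBT} (h : TStep a b) : leavesCount a = leavesCount b := by
  induction h with
  | rot a b c => simp [leavesCount]; omega
  | left c h ih => simp [leavesCount]; omega
  | right a h ih => simp [leavesCount]; omega

lemma TStep.wt_lt {a b : PBT} (h : TStep a b) : wt a < wt b := by
  induction h with
  | rot a b c => have := lc_pos c; simp [wt, leavesCount]; omega
  | left c h ih => simp [wt]; omega
  | right a h ih => have := h.lc_eq; simp [wt]; omega

lemma tle_lc {a b : PBT} (h : tle a b) : leavesCount a = leavesCount b := by
  induction h with
  | refl => rfl
  | tail h step ih => rw [ih, step.lc_eq]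

lemma tle_cases {a b : PBT} (h : tle a b) : a = b ∨ wt a < wt b := by
  induction h with
  | refl => exact Or.inl rfl
  | tail h step ih =>
    right
    rcases ih with rfl | hlt
    · exact step.wt_lt
    · exact hlt.trans step.wt_lt

lemma tle_wt {a b : PBT} (h : tle a b) : wt a ≤ wt b := by
  rcases tle_cases h with rfl | h; · rfl
  · exact h.le

lemma tle_antisymm {a b : PBT} (h : tle a b) (h' : tle b a) : a = b := by
  rcases tle_cases h with rfl | hlt; · rfl
  · exact absurd (tle_wt h') (by omega)

lemma tle_refl (a : PBT) : tle a a := Relation.ReflTransGen.refl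

lemma tle_trans {a b c : PBT} (h : tle a b) (h' : tle b c) : tle a c :=
  Relation.ReflTransGen.trans h h'

lemma tle_node_left {a a' : PBT} (c : PBT) (h : tle a a') :
    tle (.node a c) (.node a' c) :=
  Relation.ReflTransGen.lift (fun x => PBT.node x c) (fun _ _ h => TStep.left c h) _ _ h

lemma tle_node_right (a : PBT) {c c' : PBT} (h : tle c c') :
    tle (.node a c) (.node a c') :=
  Relation.ReflTransGen.lift (fun x => PBT.node a x) (fun _ _ h => TStep.right a h) _ _ h

lemma tle_of_step {a b : PBT} (h : TStep a b) : tle a b :=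
  Relation.ReflTransGen.single h

lemma lc_rightComb (k : ℕ) : leavesCount (rightComb k) = k + 1 := by
  induction k with
  | zero => rfl
  | succ k ih => simp [rightComb, leavesCount, ih]; omega

lemma comb_absorb : ∀ (a : PBT) (j : ℕ),
    tle (.node a (rightComb j)) (rightComb (leavesCount a + j)) := by
  intro a
  induction a with
  | leaf => intro j; simp [leavesCount, rightComb]; rw [Nat.add_comm]; exact tle_refl _
  | node x y ihx ihy =>
    intro j
    have h1 : tle (PBT.node (.node x y) (rightComb j)) (.node x (.node y (rightComb j))) :=
      tle_of_step (TStep.rot x y (rightComb j))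
    have h2 := tle_node_right x (ihy j)
    have h3 := ihx (leavesCount y + j)
    have : leavesCount x + (leavesCount y + j) = leavesCount (PBT.node x y) + j := by
      simp [leavesCount]; omega
    rw [this] at h3
    exact tle_trans h1 (tle_trans h2 h3)

lemma tle_top {t : PBT} {k : ℕ} (h : leavesCount t = k + 1) : tle t (rightComb k) := by
  induction t generalizing k with
  | leaf => simp [leavesCount] at h; subst k; exact tle_refl _
  | node a b iha ihb =>
    simp [leavesCount] at h
    have hb := lc_pos b
    have ha := lc_pos a
    have h2 := ihb (k := leavesCount b - 1) (by omega)
    have h3 := tle_node_right a h2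
    have h4 := comb_absorb a (leavesCount b - 1)
    have : leavesCount a + (leavesCount b - 1) = k := by omega
    rw [this] at h4
    exact tle_trans h3 h4

/-! the "remove leftmost leaf" map -/

def pl : PBT → PBT
  | .leaf => .leaf
  | .node .leaf c => c
  | .node (.node x y) c => .node (pl (.node x y)) c

@[simp] lemma pl_node_leaf (c : PBT) : pl (.node .leaf c) = c := rfl

lemma pl_node_node (x y c : PBT) : pl (.node (.node x y) c) = .node (pl (.node x y)) c := rfl

lemma TStep.src_node {a b : PBT} (h : TStep a b) : ∃ x y, a = PBT.node x y := by
  cases h with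
  | rot a b c => exact ⟨_, _, rfl⟩
  | left c h => exact ⟨_, _, rfl⟩
  | right a h => exact ⟨_, _, rfl⟩

lemma TStep.tgt_node {a b : PBT} (h : TStep a b) : ∃ x y, b = PBT.node x y := by
  cases h with
  | rot a b c => exact ⟨_, _, rfl⟩
  | left c h => exact ⟨_, _, rfl⟩
  | right a h => exact ⟨_, _, rfl⟩

lemma not_tstep_leaf {a : PBT} (h : TStep a PBT.leaf) : False := by
  obtain ⟨x, y, hxy⟩ := h.tgt_node; exact PBT.noConfusion hxy

lemma not_tstep_from_leaf {a : PBT} (h : TStep PBT.leaf a) : False := by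
  obtain ⟨x, y, hxy⟩ := h.src_node; exact PBT.noConfusion hxy

lemma pl_step {v z : PBT} (h : TStep v z) : tle (pl v) (pl z) := by
  induction h with
  | rot a b c =>
    cases a with
    | leaf => simp [pl]; exact tle_refl _
    | node x y =>
      rw [pl_node_node, pl_node_node]
      exact tle_of_step (TStep.rot _ _ _)
  | left c h ih =>
    obtain ⟨x, y, rfl⟩ := h.src_node
    obtain ⟨x', y', rfl⟩ := h.tgt_node
    rw [pl_node_node, pl_node_node]
    exact tle_node_left c ih
  | right a h ih =>
    cases a with
    | leaf => simpa [pl] using tle_of_step h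
    | node x y =>
      rw [pl_node_node, pl_node_node]
      exact tle_node_right _ (tle_of_step h)

lemma pl_mono {v z : PBT} (h : tle v z) : tle (pl v) (pl z) := by
  induction h with
  | refl => exact tle_refl _
  | tail h step ih => exact tle_trans ih (pl_step step)

lemma le_node_leaf_pl : ∀ (a b : PBT), tle (.node a b) (.node .leaf (pl (.node a b))) := by
  intro a
  induction a with
  | leaf => intro b; rw [pl_node_leaf]; exact tle_refl _
  | node x y ihx ihy =>
    intro b
    have h1 := tle_node_left b (ihx y)
    have h2 : TStep (PBT.node (.node .leaf (pl (.node x y))) b)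
        (.node .leaf (.node (pl (.node x y)) b)) := TStep.rot _ _ _
    rw [pl_node_node]
    exact tle_trans h1 (tle_of_step h2)

lemma char1 {a b w : PBT} : tle (.node a b) (.node .leaf w) ↔ tle (pl (.node a b)) w := by
  constructor
  · intro h
    have := pl_mono h
    rwa [pl_node_leaf] at this
  · intro h
    exact tle_trans (le_node_leaf_pl a b) (tle_node_right _ h)

/-! the "add a leaf at leftmost position" map -/

def XX : PBT := .node .leaf .leaf

lemma q_node (w : PBT) : ∃ x y, graft1 w XX = PBT.node x y := by
  cases w with
  | leaf => exact ⟨_, _, rfl⟩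
  | node a b => exact ⟨_, _, rfl⟩

lemma q_ne_leaf (w : PBT) : graft1 w XX ≠ PBT.leaf := by
  obtain ⟨x, y, h⟩ := q_node w; rw [h]; exact fun h => PBT.noConfusion h

lemma pl_q (w : PBT) : pl (graft1 w XX) = w := by
  induction w with
  | leaf => rfl
  | node a b iha ihb =>
    show pl (.node (graft1 a XX) b) = _
    obtain ⟨x, y, hxy⟩ := q_node a
    rw [hxy]; rw [hxy] at iha
    rw [pl_node_node, iha]

lemma q_inj : Function.Injective (fun w => graft1 w XX) := by
  intro u w h
  have := congrArg pl h
  simpa [pl_q] using this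

lemma lc_q (w : PBT) : leavesCount (graft1 w XX) = leavesCount w + 1 := by
  induction w with
  | leaf => simp [graft1, XX, leavesCount]
  | node a b iha ihb => simp [graft1, leavesCount, iha]; omega

lemma q_step {u w : PBT} (h : TStep u w) : TStep (graft1 u XX) (graft1 w XX) := by
  induction h with
  | rot a b c =>
    show TStep (.node (.node (graft1 a XX) b) c) (.node (graft1 a XX) (.node b c))
    exact TStep.rot _ _ _
  | left c h ih => exact TStep.left c ih
  | right a h ih => exact TStep.right _ h

lemma q_mono {u w : PBT} (h : tle u w) : tle (graft1 u XX) (graft1 w XX) :=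
  Relation.ReflTransGen.lift (fun x => graft1 x XX) (fun _ _ h => q_step h) _ _ h

lemma q_le_node_leaf (w : PBT) : tle (graft1 w XX) (.node .leaf w) := by
  induction w with
  | leaf => exact tle_refl _
  | node a b iha ihb =>
    show tle (.node (graft1 a XX) b) _
    have h1 := tle_node_left b iha
    have h2 : TStep (PBT.node (.node .leaf a) b) (.node .leaf (.node a b)) := TStep.rot _ _ _
    exact tle_trans h1 (tle_of_step h2)

lemma step_to_q : ∀ (w z : PBT), TStep z (graft1 w XX) → ∃ u, z = graft1 u XX ∧ tle u w := by
  have main : ∀ (z t : PBT), TStep z t → ∀ w, t = graft1 w XX → ∃ u, z = graft1 u XX ∧ tle u w := by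
    intro z t h
    induction h with
    | rot a b c =>
      intro w hw
      cases w with
      | leaf => exact absurd hw.symm (by simp [graft1, XX])
      | node w₁ w₂ =>
        rw [show graft1 (PBT.node w₁ w₂) XX = .node (graft1 w₁ XX) w₂ from rfl] at hw
        obtain ⟨h1, h2⟩ := PBT.node.inj hw
        refine ⟨.node (.node w₁ b) c, ?_, ?_⟩
        · rw [show graft1 (PBT.node (.node w₁ b) c) XX = .node (.node (graft1 w₁ XX) b) c from rfl, h1]
        · rw [← h2]; exact tle_of_step (TStep.rot _ _ _)
    | left c h ih =>
      intro w hw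
      cases w with
      | leaf =>
        obtain ⟨h1, h2⟩ := PBT.node.inj (hw.trans (show graft1 PBT.leaf XX = .node .leaf .leaf from rfl))
        exact absurd (h1 ▸ h) not_tstep_leaf
      | node w₁ w₂ =>
        rw [show graft1 (PBT.node w₁ w₂) XX = .node (graft1 w₁ XX) w₂ from rfl] at hw
        obtain ⟨h1, h2⟩ := PBT.node.inj hw
        obtain ⟨u₁, hu1, hu2⟩ := ih w₁ h1
        refine ⟨.node u₁ w₂, ?_, ?_⟩
        · rw [show graft1 (PBT.node u₁ w₂) XX = .node (graft1 u₁ XX) w₂ from rfl, ← hu1, h2]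
        · exact tle_node_left _ hu2
    | right a h ih =>
      rename_i c c'
      intro w hw
      cases w with
      | leaf =>
        obtain ⟨h1, h2⟩ := PBT.node.inj (hw.trans (show graft1 PBT.leaf XX = .node .leaf .leaf from rfl))
        exact absurd (h2 ▸ h) not_tstep_leaf
      | node w₁ w₂ =>
        rw [show graft1 (PBT.node w₁ w₂) XX = .node (graft1 w₁ XX) w₂ from rfl] at hw
        obtain ⟨h1, h2⟩ := PBT.node.inj hw
        refine ⟨.node w₁ c, ?_, ?_⟩
        · rw [show graft1 (PBT.node w₁ c) XX = .node (graft1 w₁ XX) c from rfl, h1]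
        · rw [← h2]; exact tle_node_right _ (tle_of_step h)
  exact fun w z h => main z _ h w rfl

lemma le_q {v w : PBT} (h : tle v (graft1 w XX)) : ∃ u, v = graft1 u XX ∧ tle u w := by
  induction h using Relation.ReflTransGen.head_induction_on with
  | refl => exact ⟨w, rfl, tle_refl w⟩
  | head step _ ih =>
    obtain ⟨u', hu1, hu2⟩ := ih
    obtain ⟨u, h1, h2⟩ := step_to_q u' _ (hu1 ▸ step)
    exact ⟨u, h1, tle_trans h2 hu2⟩

/-! counting and finiteness -/

lemma lc_pl : ∀ (a b : PBT), leavesCount (pl (.node a b)) + 1 = leavesCount (.node a b) := by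
  intro a
  induction a with
  | leaf => intro b; simp [leavesCount]; omega
  | node x y ihx ihy =>
    intro b
    rw [pl_node_node]
    have := ihx y
    simp [leavesCount] at *
    omega

lemma finite_le (n : ℕ) : {t : PBT | leavesCount t ≤ n}.Finite := by
  induction n with
  | zero =>
    convert Set.finite_empty
    ext t; simp only [Set.mem_setOf_eq, Set.mem_empty_iff_false, iff_false]
    have := lc_pos t; omega
  | succ n ih =>
    have hsub : {t : PBT | leavesCount t ≤ n + 1} ⊆
        insert PBT.leaf ((fun p : PBT × PBT => PBT.node p.1 p.2) ''
          ({t | leavesCount t ≤ n} ×ˢ {t | leavesCount t ≤ n})) := by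
      intro t ht
      cases t with
      | leaf => exact Set.mem_insert _ _
      | node a b =>
        simp only [Set.mem_setOf_eq, leavesCount] at ht
        have ha := lc_pos a; have hb := lc_pos b
        refine Set.mem_insert_of_mem _ ⟨(a, b), ⟨?_, ?_⟩, rfl⟩
        · simp only [Set.mem_setOf_eq]; omega
        · simp only [Set.mem_setOf_eq]; omega
    exact Set.Finite.subset (((ih.prod ih).image _).insert _) hsub

lemma finite_eq (n : ℕ) : {t : PBT | leavesCount t = n}.Finite :=
  (finite_le n).subset (by intro t ht; simp only [Set.mem_setOf_eq] at *; omega)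

lemma e_inj : Function.Injective (fun w => PBT.node PBT.leaf w) := by
  intro a b h; simpa using h

lemma node_of_lc_ge_two {v : PBT} (h : 2 ≤ leavesCount v) : ∃ a b, v = PBT.node a b := by
  cases v with
  | leaf => simp [leavesCount] at h
  | node a b => exact ⟨a, b, rfl⟩

/-- The Möbius element of the right comb `1ₙ` (for `n ≥ 3`) satisfies
`M_{1ₙ} = | ∨ M_{1ₙ₋₁} − | ⋋ M_{1ₙ₋₁}`, where `M t` is the Möbius element
`Σ_{w ≤_T t} μ(w,t)·w` in the free module on trees, encoded as the finitely
supported function with `(M t) w = μ w t`, and `μ` is the Möbius function of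
the Tamari order. -/
theorem stmt9
    (μ : PBT → PBT → ℤ) (M : PBT → (PBT →₀ ℤ))
    (hM : ∀ t w : PBT, M t w = μ w t)
    (hμrefl : ∀ t : PBT, μ t t = 1)
    (hμzero : ∀ w t : PBT, ¬ tle w t → μ w t = 0)
    (hμsum : ∀ w t : PBT, tle w t → w ≠ t →
      (∑ᶠ z : PBT, if tle w z ∧ tle z t then μ z t else 0) = 0)
    (n : ℕ) (hn : 3 ≤ n) :
    M (rightComb (n - 1)) =
      Finsupp.mapDomain (fun w => PBT.node PBT.leaf w) (M (rightComb (n - 2))) -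
      Finsupp.mapDomain (fun w => lprod PBT.leaf w) (M (rightComb (n - 2))) := by
  classical
  obtain ⟨k, rfl⟩ : ∃ k, n = k + 3 := ⟨n - 3, by omega⟩
  have h1 : k + 3 - 1 = k + 2 := by omega
  have h2 : k + 3 - 2 = k + 1 := by omega
  rw [h1, h2]
  set top : PBT := rightComb (k + 2) with htop
  set top' : PBT := rightComb (k + 1) with htop'
  have htt : top = PBT.node .leaf top' := rfl
  have lct : leavesCount top = k + 3 := lc_rightComb (k + 2)
  have lct' : leavesCount top' = k + 2 := lc_rightComb (k + 1)
  set F : Finset PBT := (finite_eq (k + 3)).toFinset with hF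
  set F' : Finset PBT := (finite_eq (k + 2)).toFinset with hF'
  have memF : ∀ z : PBT, z ∈ F ↔ leavesCount z = k + 3 := by
    intro z; rw [hF, Set.Finite.mem_toFinset]; rfl
  have memF' : ∀ z : PBT, z ∈ F' ↔ leavesCount z = k + 2 := by
    intro z; rw [hF', Set.Finite.mem_toFinset]; rfl
  have leTop : ∀ z ∈ F, tle z top := fun z hz => tle_top (by rw [(memF z).1 hz])
  have leTop' : ∀ z ∈ F', tle z top' := fun z hz => tle_top (by rw [(memF' z).1 hz])
  set N : PBT → ℤ := fun z =>
    (if PBT.node .leaf (pl z) = z then μ (pl z) top' else 0) -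
      (if graft1 (pl z) XX = z then μ (pl z) top' else 0) with hN
  -- sum over the interval [u, top'] of μ
  have hA : ∀ u : PBT, leavesCount u = k + 2 →
      (∑ w ∈ F', if tle u w then μ w top' else 0) = if u = top' then 1 else 0 := by
    intro u hu
    by_cases hut : u = top'
    · subst hut
      rw [if_pos rfl]
      rw [Finset.sum_eq_single_of_mem top' ((memF' top').2 lct')
        (fun w hw hne => if_neg (fun hle => hne (tle_antisymm (leTop' w hw) hle)))]
      rw [if_pos (tle_refl top'), hμrefl]
    · rw [if_neg hut]
      have h0 := hμsum u top' (tle_top (by rw [hu])) hut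
      have hconv : (∑ᶠ z : PBT, if tle u z ∧ tle z top' then μ z top' else 0) =
          ∑ z ∈ F', (if tle u z ∧ tle z top' then μ z top' else 0) := by
        apply finsum_eq_finset_sum_of_support_subset
        intro z hz
        simp only [Function.mem_support, ne_eq, ite_eq_right_iff, not_forall] at hz
        obtain ⟨⟨hz1, _⟩, _⟩ := hz
        exact Finset.mem_coe.mpr ((memF' z).2 (by rw [← tle_lc hz1]; exact hu))
      rw [hconv] at h0
      rw [Finset.sum_congr rfl (fun z hz =>
        show (if tle u z then μ z top' else 0) = (if tle u z ∧ tle z top' then μ z top' else 0) by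
          by_cases h : tle u z
          · rw [if_pos h, if_pos ⟨h, leTop' z hz⟩]
          · rw [if_neg h, if_neg (fun hc => h hc.1)])]
      exact h0
  -- the key combinatorial cancellation
  have hT : ∀ v ∈ F, tle v top → v ≠ top →
      (∑ z ∈ F, if tle v z ∧ tle z top then N z else 0) = 0 := by
    intro v hvF hvtop hvne
    obtain ⟨a, b, rfl⟩ := node_of_lc_ge_two (v := v) (by rw [(memF v).1 hvF]; omega)
    have congr1 : ∀ z ∈ F, (if tle (PBT.node a b) z ∧ tle z top then N z else 0) =
        (if tle (PBT.node a b) z ∧ PBT.node .leaf (pl z) = z then μ (pl z) top' else 0) -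
          (if tle (PBT.node a b) z ∧ graft1 (pl z) XX = z then μ (pl z) top' else 0) := by
      intro z hz
      by_cases h : tle (PBT.node a b) z
      · rw [if_pos ⟨h, leTop z hz⟩, hN]
        simp only [h, true_and, if_true]
      · rw [if_neg (fun hc => h hc.1), if_neg (fun hc => h hc.1),
          if_neg (fun hc => h hc.1), sub_zero]
    rw [Finset.sum_congr rfl congr1, Finset.sum_sub_distrib]
    have hT1 : (∑ z ∈ F, if tle (PBT.node a b) z ∧ PBT.node .leaf (pl z) = z
          then μ (pl z) top' else 0) =
        ∑ w ∈ F', (if tle (pl (PBT.node a b)) w then μ w top' else 0) := by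
      have hsub : F'.map ⟨fun w => PBT.node .leaf w, e_inj⟩ ⊆ F := by
        intro z hz
        rw [Finset.mem_map] at hz
        obtain ⟨w, hw, rfl⟩ := hz
        rw [memF]
        show leavesCount (PBT.node .leaf w) = k + 3
        have := (memF' w).1 hw
        simp [leavesCount, this]
        omega
      have hzero : ∀ z ∈ F, z ∉ F'.map ⟨fun w => PBT.node .leaf w, e_inj⟩ →
          (if tle (PBT.node a b) z ∧ PBT.node .leaf (pl z) = z then μ (pl z) top' else 0) = 0 := by
        intro z hz hnz
        rw [if_neg]
        rintro ⟨-, hez⟩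
        apply hnz
        rw [Finset.mem_map]
        refine ⟨pl z, (memF' (pl z)).2 ?_, hez⟩
        have hlc := (memF z).1 hz
        rw [← hez] at hlc ⊢
        simp only [pl_node_leaf]
        simp [leavesCount] at hlc ⊢
        omega
      rw [← Finset.sum_subset hsub hzero, Finset.sum_map]
      apply Finset.sum_congr rfl
      intro w hw
      simp only [Function.Embedding.coeFn_mk, pl_node_leaf, and_true]
      rw [char1]
    have hT2 : (∑ z ∈ F, if tle (PBT.node a b) z ∧ graft1 (pl z) XX = z
          then μ (pl z) top' else 0) =
        ∑ w ∈ F', (if tle (PBT.node a b) (graft1 w XX) then μ w top' else 0) := by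
      have hsub : F'.map ⟨fun w => graft1 w XX, q_inj⟩ ⊆ F := by
        intro z hz
        rw [Finset.mem_map] at hz
        obtain ⟨w, hw, rfl⟩ := hz
        simp only [Function.Embedding.coeFn_mk]
        rw [memF, lc_q, (memF' w).1 hw]
      have hzero : ∀ z ∈ F, z ∉ F'.map ⟨fun w => graft1 w XX, q_inj⟩ →
          (if tle (PBT.node a b) z ∧ graft1 (pl z) XX = z then μ (pl z) top' else 0) = 0 := by
        intro z hz hnz
        rw [if_neg]
        rintro ⟨-, hez⟩
        apply hnz
        rw [Finset.mem_map]
        refine ⟨pl z, (memF' (pl z)).2 ?_, hez⟩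
        have hlc := (memF z).1 hz
        have := lc_q (pl z)
        rw [hez] at this
        omega
      rw [← Finset.sum_subset hsub hzero, Finset.sum_map]
      apply Finset.sum_congr rfl
      intro w hw
      simp only [Function.Embedding.coeFn_mk, pl_q, and_true]
    rw [hT1, hT2]
    by_cases hq : graft1 (pl (PBT.node a b)) XX = PBT.node a b
    · have equiv : ∀ w : PBT, tle (PBT.node a b) (graft1 w XX) ↔ tle (pl (PBT.node a b)) w := by
        intro w
        constructor
        · intro h
          obtain ⟨u, hvq, hu⟩ := le_q h
          rw [hvq, pl_q]
          exact hu
        · intro h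
          have := q_mono h
          rw [hq] at this
          exact this
      have heq : (∑ w ∈ F', if tle (PBT.node a b) (graft1 w XX) then μ w top' else 0) =
          ∑ w ∈ F', (if tle (pl (PBT.node a b)) w then μ w top' else 0) :=
        Finset.sum_congr rfl (fun w _ => by rw [equiv w])
      rw [heq]
      exact sub_self _
    · have hT2z : (∑ w ∈ F', if tle (PBT.node a b) (graft1 w XX) then μ w top' else 0) = 0 := by
        apply Finset.sum_eq_zero
        intro w _
        rw [if_neg]
        intro h
        obtain ⟨u, hvq, _⟩ := le_q h
        exact hq (by rw [hvq, pl_q])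
      have hlcpl : leavesCount (pl (PBT.node a b)) = k + 2 := by
        have := lc_pl a b
        have := (memF _).1 hvF
        omega
      rw [hT2z, hA _ hlcpl, if_neg, sub_zero]
      intro hpl
      cases a with
      | leaf =>
        rw [pl_node_leaf] at hpl
        exact hvne (by rw [htt, hpl])
      | node x y =>
        rw [pl_node_node] at hpl
        have hpl' : PBT.node (pl (PBT.node x y)) b = PBT.node .leaf (rightComb k) := hpl
        obtain ⟨hxl, hbr⟩ := PBT.node.inj hpl'
        cases x with
        | leaf =>
          rw [pl_node_leaf] at hxl
          subst hxl
          subst hbr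
          exact hq rfl
        | node p r =>
          rw [pl_node_node] at hxl
          exact PBT.noConfusion hxl
  -- value at the top
  have hNtop : N top = 1 := by
    show (if PBT.node .leaf (pl top) = top then μ (pl top) top' else 0) -
      (if graft1 (pl top) XX = top then μ (pl top) top' else 0) = 1
    have hpl : pl top = top' := rfl
    rw [hpl]
    rw [if_pos htt.symm, if_neg, hμrefl, sub_zero]
    intro h
    have : graft1 top' XX = PBT.node XX (rightComb k) := rfl
    rw [this, htt] at h
    obtain ⟨hc, -⟩ := PBT.node.inj h
    exact PBT.noConfusion hc
  -- downward induction
  have key : ∀ (d : ℕ) (v : PBT), tle v top → wt top - wt v ≤ d → μ v top = N v := by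
    intro d
    induction d with
    | zero =>
      intro v hv hd
      rcases tle_cases hv with rfl | hlt
      · rw [hμrefl, hNtop]
      · omega
    | succ d ih =>
      intro v hv hd
      by_cases hvt : v = top
      · subst hvt; rw [hμrefl, hNtop]
      · have hvF : v ∈ F := (memF v).2 (by rw [tle_lc hv, lct])
        have h0 := hμsum v top hv hvt
        have hconv : (∑ᶠ z : PBT, if tle v z ∧ tle z top then μ z top else 0) =
            ∑ z ∈ F, (if tle v z ∧ tle z top then μ z top else 0) := by
          apply finsum_eq_finset_sum_of_support_subset
          intro z hz
          simp only [Function.mem_support, ne_eq, ite_eq_right_iff, not_forall] at hz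
          obtain ⟨⟨hz1, _⟩, _⟩ := hz
          exact Finset.mem_coe.mpr ((memF z).2 (by rw [← tle_lc hz1, tle_lc hv]; exact lct))
        rw [hconv] at h0
        have hsplit : (∑ z ∈ F, if tle v z ∧ tle z top then μ z top else 0) =
            (if tle v v ∧ tle v top then μ v top else 0) +
              ∑ z ∈ F.erase v, (if tle v z ∧ tle z top then μ z top else 0) := by
          rw [Finset.sum_erase_eq_sub hvF]; ring
        have herase : (∑ z ∈ F.erase v, (if tle v z ∧ tle z top then μ z top else 0)) =
            ∑ z ∈ F.erase v, (if tle v z ∧ tle z top then N z else 0) := by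
          apply Finset.sum_congr rfl
          intro z hz
          by_cases hc : tle v z ∧ tle z top
          · rw [if_pos hc, if_pos hc]
            apply ih z hc.2
            have hne : z ≠ v := Finset.ne_of_mem_erase hz
            rcases tle_cases hc.1 with rfl | hlt
            · exact absurd rfl hne
            · have := tle_wt hc.2
              omega
          · rw [if_neg hc, if_neg hc]
        have herase2 : (∑ z ∈ F.erase v, (if tle v z ∧ tle z top then N z else 0)) =
            (∑ z ∈ F, (if tle v z ∧ tle z top then N z else 0)) -
              (if tle v v ∧ tle v top then N v else 0) := by
          rw [Finset.sum_erase_eq_sub hvF]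
        rw [hsplit, herase, herase2, hT v hvF hv hvt, if_pos ⟨tle_refl v, hv⟩,
          if_pos ⟨tle_refl v, hv⟩] at h0
        linarith
  have key' : ∀ v : PBT, tle v top → μ v top = N v := fun v h =>
    key (wt top) v h (by omega)
  -- conclude
  have hq_eq : (fun w => lprod PBT.leaf w) = fun w => graft1 w XX := rfl
  ext v
  rw [Finsupp.sub_apply, hM]
  have hmap1 : Finsupp.mapDomain (fun w => PBT.node PBT.leaf w) (M top') v =
      (if PBT.node .leaf (pl v) = v then μ (pl v) top' else 0) := by
    by_cases h : PBT.node .leaf (pl v) = v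
    · rw [if_pos h]
      conv_lhs => rw [← h]
      rw [Finsupp.mapDomain_apply e_inj, hM]
    · rw [if_neg h, Finsupp.mapDomain_notin_range]
      rintro ⟨w, rfl⟩
      exact h (by rw [pl_node_leaf])
  have hmap2 : Finsupp.mapDomain (fun w => lprod PBT.leaf w) (M top') v =
      (if graft1 (pl v) XX = v then μ (pl v) top' else 0) := by
    rw [hq_eq]
    by_cases h : graft1 (pl v) XX = v
    · rw [if_pos h]
      conv_lhs => rw [← h]
      rw [Finsupp.mapDomain_apply q_inj, hM]
    · rw [if_neg h, Finsupp.mapDomain_notin_range]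
      rintro ⟨w, rfl⟩
      exact h (by rw [pl_q])
  rw [hmap1, hmap2]
  by_cases hvt : tle v top
  · rw [key' v hvt]
  · rw [hμzero v top hvt]
    have e1 : (if PBT.node .leaf (pl v) = v then μ (pl v) top' else 0) = 0 := by
      split_ifs with h
      · apply hμzero
        intro hle
        apply hvt
        rw [← h]
        exact tle_trans (tle_node_right _ hle) (by rw [htt]; exact tle_refl _)
      · rfl
    have e2 : (if graft1 (pl v) XX = v then μ (pl v) top' else 0) = 0 := by
      split_ifs with h
      · apply hμzero
        intro hle
        apply hvt
        rw [← h]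
        exact tle_trans (q_le_node_leaf (pl v))
          (tle_trans (tle_node_right _ hle) (by rw [htt]; exact tle_refl _))
      · rfl
    rw [e1, e2]
    ring
end
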